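/- Let f_k : S^1 → [0,1] be the constant map with value 1/k for k ≥ 1, and let f : ⨆_{k≥1} S^1 → [0,1] be their coproduct, attaching countably many 2-cells ⨆_{k≥1} D^2 to the interval [0,1] along f. In the closure-space pushout (Z, c_Z), with U = ⨆_k (D^2 \ S^1) ⊆ Z, one has c_Z U = U ∪ {1/k : k ≥ 1} and c_Z(c_Z U) = U ∪ {1/k : k ≥ 1} ∪ {0}. In particular c_Z is not idempotent, so the pushout in closure spaces does not agree with the pushout in topological spaces. -/

import Mathlib

open Classical in
/-- The map `g : X → Z = Y ⊔ (X \ A)` of the pushout of `f : A → Y` along `A ↪ X`: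
`g = f` on `A` and the identity on `X \ A`. -/
noncomputable def pushoutMap {X Y : Type*} (A : Set X) (f : X → Y) (x : X) :
    Y ⊕ {x : X // x ∉ A} :=
  if h : x ∈ A then Sum.inl (f x) else Sum.inr ⟨x, h⟩

/-- The closure operator of the pushout `Z = Y ⊔ (X \ A)`:
`c_Z B = c_Y (B ∩ Y) ∪ g (c_X (B ∩ (X \ A)))`. -/
noncomputable def pushoutClosure {X Y : Type*} (A : Set X) (f : X → Y)
    (cX : Set X → Set X) (cY : Set Y → Set Y)
    (B : Set (Y ⊕ {x : X // x ∉ A})) : Set (Y ⊕ {x : X // x ∉ A}) :=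
  Sum.inl '' cY (Sum.inl ⁻¹' B) ∪
    pushoutMap A f '' cX (Subtype.val '' (Sum.inr ⁻¹' B))

/-- The set `{y | ‖y‖ ≠ 1}` is dense in the closed unit disk. -/
lemma aux_dense_ne_one :
    ∀ x : ↥(Metric.closedBall (0 : EuclideanSpace ℝ (Fin 2)) 1),
      x ∈ closure {y : ↥(Metric.closedBall (0 : EuclideanSpace ℝ (Fin 2)) 1) |
        ‖(y : EuclideanSpace ℝ (Fin 2))‖ ≠ 1} := by
  intro x
  rw [closure_subtype]
  have h1 : Metric.ball (0 : EuclideanSpace ℝ (Fin 2)) 1 ⊆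
      Subtype.val '' {y : ↥(Metric.closedBall (0 : EuclideanSpace ℝ (Fin 2)) 1) |
        ‖(y : EuclideanSpace ℝ (Fin 2))‖ ≠ 1} := by
    intro z hz
    have hz' : ‖z‖ < 1 := by simpa [Metric.mem_ball] using hz
    exact ⟨⟨z, by simpa [Metric.mem_closedBall, ← dist_zero_right] using hz'.le⟩,
      by simpa using hz'.ne, rfl⟩
  have h2 := closure_mono h1
  rw [closure_ball (0 : EuclideanSpace ℝ (Fin 2)) one_ne_zero] at h2
  exact h2 x.2

/-- The closure of `{1/k : k ≥ 1}` in `ℝ` is obtained by adding `0`. -/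
lemma aux_closure_one_div :
    closure {r : ℝ | ∃ k : ℕ, 1 ≤ k ∧ r = 1 / k} =
      insert 0 {r : ℝ | ∃ k : ℕ, 1 ≤ k ∧ r = 1 / k} := by
  have hrange : {r : ℝ | ∃ k : ℕ, 1 ≤ k ∧ r = 1 / k} =
      Set.range (fun n : ℕ => 1 / ((n : ℝ) + 1)) := by
    ext r
    constructor
    · rintro ⟨k, hk, rfl⟩
      exact ⟨k - 1, by push_cast [Nat.cast_sub hk]; ring⟩
    · rintro ⟨n, rfl⟩
      exact ⟨n + 1, by omega, by push_cast; ring⟩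
  rw [hrange]
  apply subset_antisymm
  · have hc : IsClosed (insert (0 : ℝ) (Set.range fun n : ℕ => 1 / ((n : ℝ) + 1))) :=
      tendsto_one_div_add_atTop_nhds_zero_nat.isCompact_insert_range.isClosed
    exact closure_minimal (Set.subset_insert _ _) hc
  · apply Set.insert_subset
    · exact mem_closure_of_tendsto tendsto_one_div_add_atTop_nhds_zero_nat
        (Filter.Eventually.of_forall fun n => Set.mem_range_self n)
    · exact subset_closure

namespace CellAttachEx

noncomputable section

abbrev D2' : Type := ↥(Metric.closedBall (0 : EuclideanSpace ℝ (Fin 2)) 1)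
abbrev J' : Type := {k : ℕ // 1 ≤ k}
abbrev X' : Type := J' × D2'
abbrev A' : Set X' := {p | ‖(p.2 : EuclideanSpace ℝ (Fin 2))‖ = 1}
abbrev Y' : Type := ↥(Set.Icc (0 : ℝ) 1)
abbrev f' : X' → Y' := fun p =>
  ⟨1 / (p.1.1 : ℝ), ⟨by positivity,
    div_le_one_of_le₀ (by exact_mod_cast p.1.2) (by positivity)⟩⟩
abbrev cX' : Set X' → Set X' := fun S => {p | p.2 ∈ closure {x : D2' | (p.1, x) ∈ S}}
abbrev cY' : Set Y' → Set Y' := fun S => closure S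
abbrev cZ' := pushoutClosure A' f' cX' cY'
abbrev U' : Set (Y' ⊕ {x : X' // x ∉ A'}) := Set.range Sum.inr
abbrev S' : Set Y' := {y : Y' | ∃ k : ℕ, 1 ≤ k ∧ (y : ℝ) = 1 / k}

/-- A point on the unit circle. -/
abbrev x0 : D2' := ⟨EuclideanSpace.single (0 : Fin 2) (1 : ℝ), by
  have : ‖EuclideanSpace.single (0 : Fin 2) (1 : ℝ)‖ = 1 := by
    rw [EuclideanSpace.norm_single]; simp
  simp [Metric.mem_closedBall, ← dist_zero_right] at this ⊢
  rw [this]⟩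

lemma x0_mem : ∀ j : J', ((j, x0) : X') ∈ A' := by
  intro j
  show ‖(x0 : EuclideanSpace ℝ (Fin 2))‖ = 1
  show ‖EuclideanSpace.single (0 : Fin 2) (1 : ℝ)‖ = 1
  rw [EuclideanSpace.norm_single]; simp

lemma hrange : Set.range (pushoutMap A' f') = Sum.inl '' S' ∪ U' := by
  ext z
  constructor
  · rintro ⟨x, rfl⟩
    by_cases hx : x ∈ A'
    · left
      refine ⟨f' x, ⟨x.1.1, x.1.2, rfl⟩, ?_⟩
      simp [pushoutMap, hx]
    · right
      exact ⟨⟨x, hx⟩, by simp [pushoutMap, hx]⟩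
  · rintro (⟨y, ⟨k, hk, hy⟩, rfl⟩ | ⟨⟨x, hx⟩, rfl⟩)
    · refine ⟨((⟨k, hk⟩ : J'), x0), ?_⟩
      simp only [pushoutMap, dif_pos (x0_mem ⟨k, hk⟩)]
      congr 1
      exact Subtype.ext hy.symm
    · exact ⟨x, by simp [pushoutMap, hx]⟩

lemma hsecond (B : Set (Y' ⊕ {x : X' // x ∉ A'})) (hB : Sum.inr ⁻¹' B = Set.univ) :
    pushoutMap A' f' '' cX' (Subtype.val '' (Sum.inr ⁻¹' B)) = Sum.inl '' S' ∪ U' := by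
  have h1 : cX' (Subtype.val '' (Sum.inr ⁻¹' B)) = Set.univ := by
    rw [hB, Set.image_univ, Subtype.range_val_subtype]
    ext p
    simp only [Set.mem_univ, iff_true]
    have := aux_dense_ne_one p.2
    exact closure_mono (fun y hy => hy) this
  rw [h1, Set.image_univ, hrange]

lemma h1 : cZ' U' = U' ∪ Sum.inl '' S' := by
  show pushoutClosure A' f' cX' cY' U' = _
  unfold pushoutClosure
  have hpre : Sum.inl ⁻¹' U' = (∅ : Set Y') := by
    ext y; simp [U']
  rw [hpre, hsecond U' (by ext x; simp [U'])]
  show Sum.inl '' closure ∅ ∪ _ = _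
  rw [closure_empty, Set.image_empty, Set.empty_union, Set.union_comm]

lemma hclosS : closure S' = S' ∪ {y : Y' | (y : ℝ) = 0} := by
  ext y
  rw [closure_subtype]
  have himg : Subtype.val '' S' = {r : ℝ | ∃ k : ℕ, 1 ≤ k ∧ r = 1 / k} := by
    ext r
    constructor
    · rintro ⟨⟨y', hy'⟩, ⟨k, hk, h⟩, rfl⟩
      exact ⟨k, hk, h⟩
    · rintro ⟨k, hk, rfl⟩
      have hk' : (1 : ℝ) ≤ k := by exact_mod_cast hk
      refine ⟨⟨1 / k, ⟨by positivity, div_le_one_of_le₀ hk' (by positivity)⟩⟩,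
        ⟨k, hk, rfl⟩, rfl⟩
  rw [himg, aux_closure_one_div]
  constructor
  · rintro (h | ⟨k, hk, h⟩)
    · exact Or.inr h
    · exact Or.inl ⟨k, hk, h⟩
  · rintro (⟨k, hk, h⟩ | h)
    · exact Or.inr ⟨k, hk, h⟩
    · exact Or.inl h

lemma h2 : cZ' (cZ' U') = U' ∪ Sum.inl '' (S' ∪ {y : Y' | (y : ℝ) = 0}) := by
  rw [h1]
  show pushoutClosure A' f' cX' cY' _ = _
  unfold pushoutClosure
  have hpre : Sum.inl ⁻¹' (U' ∪ Sum.inl '' S') = S' := by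
    ext y
    simp [U', Sum.inl_injective.mem_set_image]
  rw [hpre, hsecond (U' ∪ Sum.inl '' S') (by ext x; simp [U'])]
  show Sum.inl '' closure S' ∪ _ = _
  rw [hclosS]
  have hsub : (Sum.inl '' S' : Set (Y' ⊕ {x : X' // x ∉ A'})) ⊆
      Sum.inl '' (S' ∪ {y : Y' | (y : ℝ) = 0}) :=
    Set.image_mono Set.subset_union_left
  rw [← Set.union_assoc, Set.union_eq_left.mpr hsub, Set.union_comm]

lemma h3 : cZ' (cZ' U') ≠ cZ' U' := by
  intro heq
  have hz : Sum.inl (⟨0, by norm_num⟩ : Y') ∈ cZ' (cZ' U') := by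
    rw [h2]
    exact Or.inr ⟨⟨0, by norm_num⟩, Or.inr rfl, rfl⟩
  rw [heq, h1] at hz
  rcases hz with ⟨x, hx⟩ | ⟨y, ⟨k, hk, hy⟩, hy'⟩
  · exact absurd hx (by simp)
  · have h0 : (y : ℝ) = 0 := by
      have := Sum.inl_injective hy'
      rw [this]
    rw [hy] at h0
    have hk' : (0 : ℝ) < k := by exact_mod_cast hk
    exact absurd h0 (by positivity)

end

end CellAttachEx

theorem countable_cell_attachment_not_topological :
    letI D2 : Type := ↥(Metric.closedBall (0 : EuclideanSpace ℝ (Fin 2)) 1)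
    letI J : Type := {k : ℕ // 1 ≤ k}
    letI X : Type := J × D2
    letI A : Set X := {p | ‖(p.2 : EuclideanSpace ℝ (Fin 2))‖ = 1}
    letI Y : Type := ↥(Set.Icc (0 : ℝ) 1)
    letI f : X → Y := fun p =>
      ⟨1 / (p.1.1 : ℝ), ⟨by positivity,
        div_le_one_of_le₀ (by exact_mod_cast p.1.2) (by positivity)⟩⟩
    letI cX : Set X → Set X := fun S => {p | p.2 ∈ closure {x : D2 | (p.1, x) ∈ S}}
    letI cY : Set Y → Set Y := fun S => closure S
    letI cZ := pushoutClosure A f cX cY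
    letI U : Set (Y ⊕ {x : X // x ∉ A}) := Set.range Sum.inr
    cZ U = U ∪ Sum.inl '' {y : Y | ∃ k : ℕ, 1 ≤ k ∧ (y : ℝ) = 1 / k} ∧
    cZ (cZ U) =
      U ∪ Sum.inl '' ({y : Y | ∃ k : ℕ, 1 ≤ k ∧ (y : ℝ) = 1 / k} ∪ {y : Y | (y : ℝ) = 0}) ∧
    cZ (cZ U) ≠ cZ U := by
  exact ⟨CellAttachEx.h1, CellAttachEx.h2, CellAttachEx.h3⟩
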